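/- Let p_1,…,p_{2n} : [0,T) → ℝ² be a solution of the planar point-vortex gradient flow with V₀(0) ≠ 0. Then T ≤ ln(2n/|V₀(0)|); in particular, the solution cannot keep the points pairwise distinct for all time, so a collision must occur in finite time. -/

import Mathlib

open Finset

noncomputable section

abbrev E2 := EuclideanSpace ℝ (Fin 2)
abbrev E3 := EuclideanSpace ℝ (Fin 3)

/-- Velocity field of the planar point-vortex gradient flow. -/
def pvVel {N : ℕ} (d : Fin N → ℤ) (q : Fin N → E2) (i : Fin N) : E2 :=
  ((1 + ‖q i‖ ^ 2) ^ 2 / 2) •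
    ((1 + ‖q i‖ ^ 2)⁻¹ • q i +
      (d i : ℝ) • ∑ j ∈ univ.erase i, (d j : ℝ) • (‖q i - q j‖ ^ 2)⁻¹ • (q i - q j))

/-- Inverse stereographic projection: the sphere point corresponding to `p ∈ ℝ²`. -/
def sph (p : E2) : E3 :=
  (WithLp.equiv 2 (Fin 3 → ℝ)).symm
    ![2 * p 0 / (1 + ‖p‖ ^ 2), 2 * p 1 / (1 + ‖p‖ ^ 2), (‖p‖ ^ 2 - 1) / (1 + ‖p‖ ^ 2)]
def dsph (p v : E2) : E3 :=
  (WithLp.equiv 2 (Fin 3 → ℝ)).symm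
    ![(2 * v 0 * (1 + ‖p‖ ^ 2) - 2 * p 0 * (2 * (inner ℝ p v : ℝ))) / ((1 + ‖p‖ ^ 2) ^ 2),
      (2 * v 1 * (1 + ‖p‖ ^ 2) - 2 * p 1 * (2 * (inner ℝ p v : ℝ))) / ((1 + ‖p‖ ^ 2) ^ 2),
      (2 * (inner ℝ p v : ℝ) * (1 + ‖p‖ ^ 2) - (‖p‖ ^ 2 - 1) * (2 * (inner ℝ p v : ℝ))) / ((1 + ‖p‖ ^ 2) ^ 2)]

lemma normsq2 (x : E2) : ‖x‖ ^ 2 = x 0 ^ 2 + x 1 ^ 2 := by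
  rw [EuclideanSpace.norm_eq, Real.sq_sqrt (by positivity)]
  simp [Fin.sum_univ_two, sq_abs]

lemma inner2 (x y : E2) : (inner ℝ x y : ℝ) = x 0 * y 0 + x 1 * y 1 := by
  simp [PiLp.inner_apply, Fin.sum_univ_two, RCLike.inner_apply, conj_trivial]; ring

-- symmetrization machinery
lemma swap_sum {N : ℕ} (F : Fin N → Fin N → ℝ) :
    ∑ i, ∑ j ∈ univ.erase i, F j i = ∑ i, ∑ j ∈ univ.erase i, F i j := by
  rw [Finset.sum_comm' (t' := univ) (s' := fun j => univ.erase j)]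
  intro x y
  simp [mem_erase, and_comm, ne_comm, eq_comm]

lemma sum_pair {N : ℕ} (F : Fin N → Fin N → ℝ) :
    ∑ i, ∑ j ∈ univ.erase i, F i j
      = (∑ i, ∑ j ∈ univ.erase i, (F i j + F j i)) / 2 := by
  have h := swap_sum F
  simp only [Finset.sum_add_distrib]
  rw [h]; ring

lemma sum_dd {N : ℕ} (d : Fin N → ℤ) (hd : ∀ i, d i = 1 ∨ d i = -1)
    (hdsum : ∑ i, d i = 0) (i : Fin N) :
    ∑ j ∈ univ.erase i, ((d i : ℝ) * (d j : ℝ)) = -1 := by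
  have h1 : ∑ j, (d j : ℝ) = 0 := by exact_mod_cast congrArg (Int.cast : ℤ → ℝ) hdsum
  have h2 : ∑ j ∈ univ.erase i, (d j : ℝ) = -(d i : ℝ) := by
    have := Finset.sum_erase_add univ (fun j => (d j : ℝ)) (mem_univ i)
    linarith [this, h1]
  rw [← Finset.mul_sum, h2]
  rcases hd i with h | h <;> rw [h] <;> norm_num

lemma eval_const {N : ℕ} (d : Fin N → ℤ) (hd : ∀ i, d i = 1 ∨ d i = -1)
    (hdsum : ∑ i, d i = 0) :
    ∑ i, ∑ j ∈ univ.erase i, ((d i : ℝ) * (d j : ℝ)) = -(N : ℝ) := by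
  simp [sum_dd d hd hdsum]

lemma eval_lin {N : ℕ} (d : Fin N → ℤ) (hd : ∀ i, d i = 1 ∨ d i = -1)
    (hdsum : ∑ i, d i = 0) (c : Fin N → ℝ) :
    ∑ i, ∑ j ∈ univ.erase i, ((d i : ℝ) * (d j : ℝ) * (c i + c j)) = -2 * ∑ i, c i := by
  have e1 : ∑ i, ∑ j ∈ univ.erase i, ((d i : ℝ) * (d j : ℝ) * c i) = -∑ i, c i := by
    have h : ∀ i, ∑ j ∈ univ.erase i, ((d i : ℝ) * (d j : ℝ) * c i)
        = (∑ j ∈ univ.erase i, ((d i : ℝ) * (d j : ℝ))) * c i := by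
      intro i; rw [Finset.sum_mul]
    simp only [h, sum_dd d hd hdsum]
    simp
  have e2 : ∑ i, ∑ j ∈ univ.erase i, ((d i : ℝ) * (d j : ℝ) * c j) = -∑ i, c i := by
    have h : ∑ i, ∑ j ∈ univ.erase i, ((d i : ℝ) * (d j : ℝ) * c j)
        = ∑ i, ∑ j ∈ univ.erase i, (fun a b => (d a : ℝ) * (d b : ℝ) * c a) j i := by
      exact Finset.sum_congr rfl fun i _ => Finset.sum_congr rfl fun j _ => by ring
    rw [h, swap_sum]; exact e1
  calc ∑ i, ∑ j ∈ univ.erase i, ((d i : ℝ) * (d j : ℝ) * (c i + c j))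
      = ∑ i, (∑ j ∈ univ.erase i, ((d i : ℝ) * (d j : ℝ) * c i)
          + ∑ j ∈ univ.erase i, ((d i : ℝ) * (d j : ℝ) * c j)) := by
        refine Finset.sum_congr rfl fun i _ => ?_
        rw [← Finset.sum_add_distrib]
        exact Finset.sum_congr rfl fun j _ => by ring
    _ = -2 * ∑ i, c i := by rw [Finset.sum_add_distrib, e1, e2]; ring

def Svec {N : ℕ} (d : Fin N → ℤ) (q : Fin N → E2) (i : Fin N) (k : Fin 2) : ℝ :=
  ∑ j ∈ univ.erase i, (d i : ℝ) * (d j : ℝ) * (‖q i - q j‖ ^ 2)⁻¹ * (q i k - q j k)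

lemma pvVel_apply {N : ℕ} (d : Fin N → ℤ) (q : Fin N → E2) (i : Fin N) (k : Fin 2) :
    pvVel d q i k = (1 + ‖q i‖ ^ 2) / 2 * q i k
      + (1 + ‖q i‖ ^ 2) ^ 2 / 2 * Svec d q i k := by
  have hne : (1 + ‖q i‖ ^ 2) ≠ 0 := by positivity
  simp only [pvVel, Svec, PiLp.smul_apply, PiLp.add_apply, smul_eq_mul]
  have hsum : (∑ j ∈ univ.erase i, (d j : ℝ) • (‖q i - q j‖ ^ 2)⁻¹ • (q i - q j)) k
      = ∑ j ∈ univ.erase i, (d j : ℝ) * (‖q i - q j‖ ^ 2)⁻¹ * (q i k - q j k) := by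
    rw [WithLp.ofLp_sum, Finset.sum_apply]
    exact Finset.sum_congr rfl fun j _ => by
      simp only [PiLp.smul_apply, PiLp.sub_apply, smul_eq_mul]; ring
  rw [hsum, mul_add]
  congr 1
  · field_simp
  · simp only [Finset.mul_sum]
    refine Finset.sum_congr rfl fun j _ => by ring

-- per-pair identities
lemma pair_horiz {N : ℕ} (d : Fin N → ℤ) (q : Fin N → E2) (k : Fin 2)
    {i j : Fin N} (hne : q i ≠ q j) :
    ((d i : ℝ) * (d j : ℝ) * (‖q i - q j‖ ^ 2)⁻¹ *
        ((1 + ‖q i‖ ^ 2) * (q i k - q j k)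
          - 2 * q i k * ((q i 0 - q j 0) * q i 0 + (q i 1 - q j 1) * q i 1)))
      + ((d j : ℝ) * (d i : ℝ) * (‖q j - q i‖ ^ 2)⁻¹ *
        ((1 + ‖q j‖ ^ 2) * (q j k - q i k)
          - 2 * q j k * ((q j 0 - q i 0) * q j 0 + (q j 1 - q i 1) * q j 1)))
      = -((d i : ℝ) * (d j : ℝ) * (q i k + q j k)) := by
  have h1 : ‖q i - q j‖ ^ 2 = (q i 0 - q j 0) ^ 2 + (q i 1 - q j 1) ^ 2 := by
    rw [normsq2]; rfl
  have h2 : ‖q j - q i‖ ^ 2 = (q i 0 - q j 0) ^ 2 + (q i 1 - q j 1) ^ 2 := by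
    rw [norm_sub_rev, h1]
  have hA : (q i 0 - q j 0) ^ 2 + (q i 1 - q j 1) ^ 2 ≠ 0 := by
    rw [← h1]
    exact pow_ne_zero _ (norm_ne_zero_iff.mpr (sub_ne_zero_of_ne hne))
  rw [h1, h2, normsq2 (q i), normsq2 (q j)]
  field_simp
  ring

lemma pair_vert {N : ℕ} (d : Fin N → ℤ) (q : Fin N → E2)
    {i j : Fin N} (hne : q i ≠ q j) :
    ((d i : ℝ) * (d j : ℝ) * (‖q i - q j‖ ^ 2)⁻¹ *
        ((q i 0 - q j 0) * q i 0 + (q i 1 - q j 1) * q i 1))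
      + ((d j : ℝ) * (d i : ℝ) * (‖q j - q i‖ ^ 2)⁻¹ *
        ((q j 0 - q i 0) * q j 0 + (q j 1 - q i 1) * q j 1))
      = (d i : ℝ) * (d j : ℝ) := by
  have h1 : ‖q i - q j‖ ^ 2 = (q i 0 - q j 0) ^ 2 + (q i 1 - q j 1) ^ 2 := by
    rw [normsq2]; rfl
  have h2 : ‖q j - q i‖ ^ 2 = (q i 0 - q j 0) ^ 2 + (q i 1 - q j 1) ^ 2 := by
    rw [norm_sub_rev, h1]
  have hA : (q i 0 - q j 0) ^ 2 + (q i 1 - q j 1) ^ 2 ≠ 0 := by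
    rw [← h1]
    exact pow_ne_zero _ (norm_ne_zero_iff.mpr (sub_ne_zero_of_ne hne))
  rw [h1, h2]
  field_simp
  ring

lemma horiz {N : ℕ} (d : Fin N → ℤ) (hd : ∀ i, d i = 1 ∨ d i = -1)
    (hdsum : ∑ i, d i = 0) (q : Fin N → E2) (hq : ∀ i j, i ≠ j → q i ≠ q j) (k : Fin 2) :
    ∑ i, (2 * pvVel d q i k * (1 + ‖q i‖ ^ 2)
        - 2 * q i k * (2 * (inner ℝ (q i) (pvVel d q i) : ℝ))) / ((1 + ‖q i‖ ^ 2) ^ 2)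
      = ∑ i, 2 * q i k / (1 + ‖q i‖ ^ 2) := by
  have step1 : ∀ i, (2 * pvVel d q i k * (1 + ‖q i‖ ^ 2)
        - 2 * q i k * (2 * (inner ℝ (q i) (pvVel d q i) : ℝ))) / ((1 + ‖q i‖ ^ 2) ^ 2)
      = 2 * q i k / (1 + ‖q i‖ ^ 2)
        + (-(q i k) + ((1 + ‖q i‖ ^ 2) * Svec d q i k
            - 2 * q i k * (q i 0 * Svec d q i 0 + q i 1 * Svec d q i 1))) := by
    intro i
    have hpos : (0:ℝ) < 1 + ‖q i‖ ^ 2 := by positivity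
    have hne : (1 + ‖q i‖ ^ 2 : ℝ) ≠ 0 := hpos.ne'
    rw [inner2, pvVel_apply d q i k, pvVel_apply d q i 0, pvVel_apply d q i 1,
      normsq2 (q i)]
    field_simp
    ring
  rw [Finset.sum_congr rfl fun i _ => step1 i, Finset.sum_add_distrib]
  suffices h : ∑ i, (-(q i k) + ((1 + ‖q i‖ ^ 2) * Svec d q i k
      - 2 * q i k * (q i 0 * Svec d q i 0 + q i 1 * Svec d q i 1))) = 0 by
    rw [h, add_zero]
  have hG : ∀ i, (1 + ‖q i‖ ^ 2) * Svec d q i k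
      - 2 * q i k * (q i 0 * Svec d q i 0 + q i 1 * Svec d q i 1)
      = ∑ j ∈ univ.erase i, ((d i : ℝ) * (d j : ℝ) * (‖q i - q j‖ ^ 2)⁻¹ *
          ((1 + ‖q i‖ ^ 2) * (q i k - q j k)
            - 2 * q i k * ((q i 0 - q j 0) * q i 0 + (q i 1 - q j 1) * q i 1))) := by
    intro i
    simp only [Svec, Finset.mul_sum, mul_add, ← Finset.sum_add_distrib,
      ← Finset.sum_sub_distrib]
    exact Finset.sum_congr rfl fun j _ => by ring
  rw [Finset.sum_add_distrib, Finset.sum_congr rfl fun i _ => hG i, sum_pair]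
  have hpt : ∑ i, ∑ j ∈ univ.erase i,
      (((d i : ℝ) * (d j : ℝ) * (‖q i - q j‖ ^ 2)⁻¹ *
          ((1 + ‖q i‖ ^ 2) * (q i k - q j k)
            - 2 * q i k * ((q i 0 - q j 0) * q i 0 + (q i 1 - q j 1) * q i 1)))
        + ((d j : ℝ) * (d i : ℝ) * (‖q j - q i‖ ^ 2)⁻¹ *
          ((1 + ‖q j‖ ^ 2) * (q j k - q i k)
            - 2 * q j k * ((q j 0 - q i 0) * q j 0 + (q j 1 - q i 1) * q j 1))))
      = ∑ i, ∑ j ∈ univ.erase i, -((d i : ℝ) * (d j : ℝ) * (q i k + q j k)) := by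
    refine Finset.sum_congr rfl fun i _ => Finset.sum_congr rfl fun j hj => ?_
    exact pair_horiz d q k (hq i j (Ne.symm (Finset.ne_of_mem_erase hj)))
  rw [hpt]
  have := eval_lin d hd hdsum (fun i => q i k)
  simp only [← Finset.sum_neg_distrib] at *
  rw [show (∑ i, ∑ j ∈ univ.erase i, -((d i : ℝ) * (d j : ℝ) * (q i k + q j k)))
      = -∑ i, ∑ j ∈ univ.erase i, ((d i : ℝ) * (d j : ℝ) * (q i k + q j k)) by
    simp [Finset.sum_neg_distrib]]
  rw [this]
  simp [Finset.sum_neg_distrib]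

lemma vert {N : ℕ} (d : Fin N → ℤ) (hd : ∀ i, d i = 1 ∨ d i = -1)
    (hdsum : ∑ i, d i = 0) (q : Fin N → E2) (hq : ∀ i j, i ≠ j → q i ≠ q j) :
    ∑ i, (2 * (inner ℝ (q i) (pvVel d q i) : ℝ) * (1 + ‖q i‖ ^ 2)
        - (‖q i‖ ^ 2 - 1) * (2 * (inner ℝ (q i) (pvVel d q i) : ℝ))) / ((1 + ‖q i‖ ^ 2) ^ 2)
      = ∑ i, (‖q i‖ ^ 2 - 1) / (1 + ‖q i‖ ^ 2) := by
  have step1 : ∀ i, (2 * (inner ℝ (q i) (pvVel d q i) : ℝ) * (1 + ‖q i‖ ^ 2)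
        - (‖q i‖ ^ 2 - 1) * (2 * (inner ℝ (q i) (pvVel d q i) : ℝ))) / ((1 + ‖q i‖ ^ 2) ^ 2)
      = (‖q i‖ ^ 2 - 1) / (1 + ‖q i‖ ^ 2)
        + (1 + 2 * (q i 0 * Svec d q i 0 + q i 1 * Svec d q i 1)) := by
    intro i
    have hpos : (0:ℝ) < 1 + ‖q i‖ ^ 2 := by positivity
    have hne : (1 + ‖q i‖ ^ 2 : ℝ) ≠ 0 := hpos.ne'
    rw [inner2, pvVel_apply d q i 0, pvVel_apply d q i 1, normsq2 (q i)]
    field_simp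
    ring
  rw [Finset.sum_congr rfl fun i _ => step1 i, Finset.sum_add_distrib]
  suffices h : ∑ i, (1 + 2 * (q i 0 * Svec d q i 0 + q i 1 * Svec d q i 1)) = 0 by
    rw [h, add_zero]
  have hG : ∀ i, q i 0 * Svec d q i 0 + q i 1 * Svec d q i 1
      = ∑ j ∈ univ.erase i, ((d i : ℝ) * (d j : ℝ) * (‖q i - q j‖ ^ 2)⁻¹ *
          ((q i 0 - q j 0) * q i 0 + (q i 1 - q j 1) * q i 1)) := by
    intro i
    simp only [Svec, Finset.mul_sum, ← Finset.sum_add_distrib]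
    exact Finset.sum_congr rfl fun j _ => by ring
  rw [Finset.sum_add_distrib, Finset.sum_congr rfl fun i _ => congrArg (2 * ·) (hG i)]
  simp only [Finset.mul_sum]
  rw [show (∑ i, ∑ j ∈ univ.erase i,
      2 * ((d i : ℝ) * (d j : ℝ) * (‖q i - q j‖ ^ 2)⁻¹ *
        ((q i 0 - q j 0) * q i 0 + (q i 1 - q j 1) * q i 1))) =
      2 * ∑ i, ∑ j ∈ univ.erase i,
      ((d i : ℝ) * (d j : ℝ) * (‖q i - q j‖ ^ 2)⁻¹ *
        ((q i 0 - q j 0) * q i 0 + (q i 1 - q j 1) * q i 1)) from by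
    rw [Finset.mul_sum]; exact Finset.sum_congr rfl fun i _ => by rw [Finset.mul_sum]]
  rw [sum_pair]
  have hpt : ∑ i, ∑ j ∈ univ.erase i,
      (((d i : ℝ) * (d j : ℝ) * (‖q i - q j‖ ^ 2)⁻¹ *
          ((q i 0 - q j 0) * q i 0 + (q i 1 - q j 1) * q i 1))
        + ((d j : ℝ) * (d i : ℝ) * (‖q j - q i‖ ^ 2)⁻¹ *
          ((q j 0 - q i 0) * q j 0 + (q j 1 - q i 1) * q j 1)))
      = ∑ i, ∑ j ∈ univ.erase i, ((d i : ℝ) * (d j : ℝ)) := by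
    refine Finset.sum_congr rfl fun i _ => Finset.sum_congr rfl fun j hj => ?_
    exact pair_vert d q (hq i j (Ne.symm (Finset.ne_of_mem_erase hj)))
  rw [hpt, eval_const d hd hdsum]
  simp only [Finset.sum_const, card_univ, Fintype.card_fin, nsmul_eq_mul, mul_one]
  ring

lemma key {N : ℕ} (d : Fin N → ℤ) (hd : ∀ i, d i = 1 ∨ d i = -1)
    (hdsum : ∑ i, d i = 0) (q : Fin N → E2) (hq : ∀ i j, i ≠ j → q i ≠ q j) :
    ∑ i, dsph (q i) (pvVel d q i) = ∑ i, sph (q i) := by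
  apply (PiLp.continuousLinearEquiv 2 ℝ fun _ : Fin 3 => ℝ).injective
  rw [map_sum, map_sum]
  have hL : ∀ x : Fin 3 → ℝ,
      (PiLp.continuousLinearEquiv 2 ℝ fun _ : Fin 3 => ℝ)
        ((WithLp.equiv 2 (Fin 3 → ℝ)).symm x) = x := fun x => rfl
  simp only [dsph, sph, hL]
  funext k
  rw [Finset.sum_apply, Finset.sum_apply]
  fin_cases k
  · simpa only [Fin.zero_eta, Matrix.cons_val_zero] using horiz d hd hdsum q hq 0
  · simpa only [Fin.mk_one, Matrix.cons_val_one, Matrix.head_cons, Matrix.cons_val_zero] using horiz d hd hdsum q hq 1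
  · simpa only [Fin.reduceFinMk, Matrix.cons_val_two, Matrix.tail_cons, Matrix.head_cons] using
      vert d hd hdsum q hq

lemma sph_norm (p : E2) : ‖sph p‖ = 1 := by
  have hpos : (0:ℝ) < 1 + ‖p‖ ^ 2 := by positivity
  rw [EuclideanSpace.norm_eq]
  rw [show ∑ i, ‖sph p i‖ ^ 2 = 1 from ?_]
  · exact Real.sqrt_one
  rw [Fin.sum_univ_three]
  simp only [sph, WithLp.equiv_symm_apply, PiLp.toLp_apply, Matrix.cons_val_zero, Matrix.cons_val_one,
    Matrix.head_cons, Matrix.cons_val_two, Matrix.tail_cons, Real.norm_eq_abs, sq_abs]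
  rw [normsq2]
  field_simp
  ring

lemma norm_sq_pos (p : E2) : (0:ℝ) < 1 + ‖p‖ ^ 2 := by positivity

lemma hasDeriv_sph {f : ℝ → E2} {v : E2} {s : Set ℝ} {x : ℝ} (hf : HasDerivWithinAt f v s x) :
    HasDerivWithinAt (fun t => sph (f t)) (dsph (f x) v) s x := by
  have hR : HasDerivWithinAt (fun t => ‖f t‖ ^ 2) (2 * (inner ℝ (f x) v : ℝ)) s x := by
    have := (hf.inner ℝ hf)
    simp only [real_inner_self_eq_norm_sq] at this
    have e : 2 * (inner ℝ (f x) v : ℝ) = inner ℝ (f x) v + inner ℝ v (f x) := by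
      rw [real_inner_comm]; ring
    rw [e]; exact this
  have hD : HasDerivWithinAt (fun t => 1 + ‖f t‖ ^ 2) (2 * (inner ℝ (f x) v : ℝ)) s x :=
hR.const_add 1
  have hDne : (1 + ‖f x‖ ^ 2) ≠ 0 := (norm_sq_pos (f x)).ne'
  have hcoord : ∀ k : Fin 2, HasDerivWithinAt (fun t => f t k) (v k) s x := fun k => by
    exact ((EuclideanSpace.proj (𝕜 := ℝ) k).hasFDerivAt.comp_hasDerivWithinAt x hf)
  have h0 : HasDerivWithinAt (fun t => 2 * f t 0 / (1 + ‖f t‖ ^ 2))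
      ((2 * v 0 * (1 + ‖f x‖ ^ 2) - 2 * f x 0 * (2 * (inner ℝ (f x) v : ℝ))) / ((1 + ‖f x‖ ^ 2) ^ 2)) s x :=
    (((hcoord 0).const_mul 2).div hD hDne)
  have h1 : HasDerivWithinAt (fun t => 2 * f t 1 / (1 + ‖f t‖ ^ 2))
      ((2 * v 1 * (1 + ‖f x‖ ^ 2) - 2 * f x 1 * (2 * (inner ℝ (f x) v : ℝ))) / ((1 + ‖f x‖ ^ 2) ^ 2)) s x :=
    (((hcoord 1).const_mul 2).div hD hDne)
  have h2 : HasDerivWithinAt (fun t => (‖f t‖ ^ 2 - 1) / (1 + ‖f t‖ ^ 2))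
      ((2 * (inner ℝ (f x) v : ℝ) * (1 + ‖f x‖ ^ 2) - (‖f x‖ ^ 2 - 1) * (2 * (inner ℝ (f x) v : ℝ))) / ((1 + ‖f x‖ ^ 2) ^ 2)) s x :=
    ((hR.sub_const 1).div hD hDne)
  have hPi : HasDerivWithinAt
      (fun t => (![2 * f t 0 / (1 + ‖f t‖ ^ 2), 2 * f t 1 / (1 + ‖f t‖ ^ 2),
        (‖f t‖ ^ 2 - 1) / (1 + ‖f t‖ ^ 2)] : Fin 3 → ℝ))
      (![(2 * v 0 * (1 + ‖f x‖ ^ 2) - 2 * f x 0 * (2 * (inner ℝ (f x) v : ℝ))) / ((1 + ‖f x‖ ^ 2) ^ 2),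
        (2 * v 1 * (1 + ‖f x‖ ^ 2) - 2 * f x 1 * (2 * (inner ℝ (f x) v : ℝ))) / ((1 + ‖f x‖ ^ 2) ^ 2),
        (2 * (inner ℝ (f x) v : ℝ) * (1 + ‖f x‖ ^ 2) - (‖f x‖ ^ 2 - 1) * (2 * (inner ℝ (f x) v : ℝ))) / ((1 + ‖f x‖ ^ 2) ^ 2)]) s x := by
    rw [hasDerivWithinAt_pi]
    intro i
    fin_cases i <;>
      simp only [Matrix.cons_val_zero, Matrix.cons_val_one, Matrix.head_cons, Fin.mk_one,
        Matrix.cons_val_two, Matrix.tail_cons, Fin.isValue] <;>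
      first
      | exact h0
      | exact h1
      | exact h2
  exact (PiLp.continuousLinearEquiv 2 ℝ (fun _ : Fin 3 => ℝ)).symm.hasFDerivAt.comp_hasDerivWithinAt x hPi

/-- If `V₀(0) ≠ 0`, a solution of the planar point-vortex gradient flow keeping the
points pairwise distinct can exist only up to time `ln(2n/‖V₀(0)‖)`: a collision must
occur in finite time. -/
theorem collision_in_finite_time
    (n : ℕ) (hn : 1 ≤ n) (T : ℝ)
    (p : Fin (2 * n) → ℝ → E2) (d : Fin (2 * n) → ℤ)
    (hd : ∀ i, d i = 1 ∨ d i = -1) (hdsum : ∑ i, d i = 0)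
    (hdist : ∀ t ∈ Set.Ico (0 : ℝ) T, ∀ i j, i ≠ j → p i t ≠ p j t)
    (hode : ∀ t ∈ Set.Ico (0 : ℝ) T, ∀ i,
      HasDerivWithinAt (p i) (pvVel d (fun j => p j t) i) (Set.Ico (0 : ℝ) T) t)
    (hV0 : (∑ i, sph (p i 0)) ≠ 0) :
    T ≤ Real.log ((2 * n : ℝ) / ‖∑ i, sph (p i 0)‖) := by
  set V : ℝ → E3 := fun t => ∑ i, sph (p i t) with hVdef
  have hVb : ∀ t, ‖V t‖ ≤ (2 * n : ℝ) := by
    intro t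
    calc ‖∑ i, sph (p i t)‖ ≤ ∑ i : Fin (2 * n), ‖sph (p i t)‖ := norm_sum_le _ _
      _ = (2 * n : ℝ) := by simp [sph_norm]
  have hV0pos : 0 < ‖V 0‖ := norm_pos_iff.mpr hV0
  have hL0 : 0 ≤ Real.log ((2 * n : ℝ) / ‖V 0‖) :=
    Real.log_nonneg ((one_le_div hV0pos).mpr (hVb 0))
  by_contra hT
  push_neg at hT
  set t0 : ℝ := (Real.log ((2 * n : ℝ) / ‖V 0‖) + T) / 2 with ht0def
  have ht0 : t0 ∈ Set.Ico (0 : ℝ) T := ⟨by linarith, by linarith⟩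
  have hVd : ∀ t ∈ Set.Ico (0 : ℝ) T, HasDerivWithinAt V (V t) (Set.Ico (0 : ℝ) T) t := by
    intro t ht
    have h1 : HasDerivWithinAt V
        (∑ i, dsph (p i t) (pvVel d (fun j => p j t) i)) (Set.Ico (0 : ℝ) T) t :=
      HasDerivWithinAt.fun_sum fun i _ => hasDeriv_sph (hode t ht i)
    rwa [key d hd hdsum (fun j => p j t) (fun i j hij => hdist t ht i j hij)] at h1
  set W : ℝ → E3 := fun t => Real.exp (-t) • V t with hWdef
  have hWd : ∀ t ∈ Set.Ico (0 : ℝ) T, HasDerivWithinAt W 0 (Set.Ico (0 : ℝ) T) t := by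
    intro t ht
    have hc : HasDerivWithinAt (fun s : ℝ => Real.exp (-s)) (-Real.exp (-t))
        (Set.Ico (0 : ℝ) T) t := by
      have h := ((Real.hasDerivAt_exp (-t)).comp t (hasDerivAt_neg t)).hasDerivWithinAt
        (s := Set.Ico (0:ℝ) T)
      rw [mul_neg_one] at h; exact h
    have h2 := hc.smul (hVd t ht)
    have e : (0 : E3) = Real.exp (-t) • V t + -Real.exp (-t) • V t := by
      simp [neg_smul]
    rw [e]; exact h2
  have hWconst : W t0 = W 0 := by
    refine Convex.is_const_of_fderivWithin_eq_zero (convex_Ico 0 T)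
      (fun s hs => (hWd s hs).differentiableWithinAt) (fun s hs => ?_) ht0
      ⟨le_refl 0, lt_of_le_of_lt ht0.1 ht0.2⟩
    have h3 := (hWd s hs).hasFDerivWithinAt.fderivWithin ((uniqueDiffOn_Ico 0 T) s hs)
    rw [h3]
    ext v
    simp
  have hW0 : W 0 = V 0 := by simp [hWdef]
  have hnorm : ‖V 0‖ = Real.exp (-t0) * ‖V t0‖ := by
    rw [← hW0, ← hWconst, hWdef]
    simp [norm_smul, Real.norm_eq_abs, abs_of_pos (Real.exp_pos _)]
  have hexp : Real.exp t0 * ‖V 0‖ ≤ (2 * n : ℝ) := by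
    rw [hnorm, ← mul_assoc, ← Real.exp_add]
    simpa using hVb t0
  have ht0le : t0 ≤ Real.log ((2 * n : ℝ) / ‖V 0‖) := by
    rw [Real.le_log_iff_exp_le (by positivity)]
    exact (le_div_iff₀ hV0pos).mpr hexp
  linarith
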